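/- Let M be a hypersurface of Sol^4_0 whose unit normal field at every point has the form N = a E_1 + b E_2 + c E_3 + d E_4 with smooth functions a,b,c,d, a²+b²+c²+d² = 1, and suppose M is a Codazzi hypersurface (the ambient curvature satisfies g(R̃(X,Y)Z, N) = 0 for all tangent X,Y,Z). Then (a²+b²)(c²+d²) = 0 at every point; i.e., the normal lies entirely in span{E_1,E_2} or entirely in span{E_3,E_4}. -/

import Mathlib

noncomputable section

abbrev Pt := Fin 4 → ℝ
abbrev Vec := Fin 4 → ℝ
abbrev VF := Pt → Vec

/-- Diagonal coefficients of the metric g = e^{-2t}(dx²+dy²)+e^{4t}dz²+dt². -/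
def Gc (i : Fin 4) (p : Pt) : ℝ :=
  if i = 0 ∨ i = 1 then Real.exp (-2 * p 3)
  else if i = 2 then Real.exp (4 * p 3) else 1

/-- The Riemannian metric of Sol⁴₀ at a point, as a bilinear form on tangent vectors. -/
def gSol (p : Pt) (v w : Vec) : ℝ := ∑ i, Gc i p * v i * w i

def cvec (i : Fin 4) : Vec := fun j => if j = i then 1 else 0

/-- Partial derivative in the i-th coordinate direction. -/
def pd (i : Fin 4) (f : Pt → ℝ) (p : Pt) : ℝ := fderiv ℝ f p (cvec i)

/-- Christoffel symbols of the (diagonal) metric gSol. -/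
def Chr (k i j : Fin 4) (p : Pt) : ℝ :=
  (1 / (2 * Gc k p)) *
    ((if j = k then pd i (Gc k) p else 0) +
     (if i = k then pd j (Gc k) p else 0) -
     (if i = j then pd k (Gc i) p else 0))

/-- Levi-Civita covariant derivative ∇̃_X Y of the metric gSol. -/
def nabla (X Y : VF) : VF := fun p k =>
  fderiv ℝ (fun q => Y q k) p (X p) + ∑ i, ∑ j, Chr k i j p * X p i * Y p j

/-- Lie bracket of vector fields. -/
def bracket (X Y : VF) : VF := fun p k =>
  fderiv ℝ (fun q => Y q k) p (X p) - fderiv ℝ (fun q => X q k) p (Y p)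

/-- Riemann curvature tensor R(X,Y)Z = ∇_X∇_Y Z − ∇_Y∇_X Z − ∇_{[X,Y]}Z. -/
def Riem (X Y Z : VF) : VF := fun p =>
  nabla X (nabla Y Z) p - nabla Y (nabla X Z) p - nabla (bracket X Y) Z p

/-- The orthonormal frame E₁ = eᵗ∂ₓ, E₂ = eᵗ∂_y, E₃ = e^{-2t}∂_z, E₄ = ∂_t. -/
def EE (i : Fin 4) : VF := fun p j =>
  if i = 0 then (if j = 0 then Real.exp (p 3) else 0)
  else if i = 1 then (if j = 1 then Real.exp (p 3) else 0)
  else if i = 2 then (if j = 2 then Real.exp (-2 * p 3) else 0)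
  else (if j = 3 then 1 else 0)

/-- The curvature tensor evaluated pointwise (via constant extensions). -/
def RiemT (p : Pt) (u v w : Vec) : Vec := Riem (fun _ => u) (fun _ => v) (fun _ => w) p

/-- Normal vector aE₁ + bE₂ + cE₃ + dE₄ at p. -/
def Nvec (p : Pt) (a b c d : ℝ) : Vec :=
  a • EE 0 p + b • EE 1 p + c • EE 2 p + d • EE 3 p

/- ============ auxiliary development ============ -/

lemma hasF (c : ℝ) (p : Pt) :
    HasFDerivAt (fun q : Pt => Real.exp (c * q 3))
      ((c * Real.exp (c * p 3)) • (ContinuousLinearMap.proj 3 : Pt →L[ℝ] ℝ)) p := by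
  have h3 : HasFDerivAt (fun q : Pt => q 3)
      (ContinuousLinearMap.proj 3 : Pt →L[ℝ] ℝ) p :=
    by exact (ContinuousLinearMap.proj (R := ℝ) (φ := fun _ : Fin 4 => ℝ) 3).hasFDerivAt
  have := (h3.const_mul c).exp
  simpa [smul_smul, mul_comm] using this

lemma fderiv_exp_coord (c : ℝ) (p : Pt) (v : Vec) :
    fderiv ℝ (fun q : Pt => Real.exp (c * q 3)) p v = c * Real.exp (c * p 3) * v 3 := by
  rw [(hasF c p).fderiv]
  simp [mul_assoc]

lemma pd_exp (c : ℝ) (i : Fin 4) (p : Pt) :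
    pd i (fun q : Pt => Real.exp (c * q 3)) p = if i = 3 then c * Real.exp (c * p 3) else 0 := by
  rw [pd, fderiv_exp_coord]
  by_cases h : i = 3 <;> simp [h, cvec]
  · intro h'; exact absurd h'.symm h

lemma Gc0 : Gc 0 = fun q : Pt => Real.exp (-2 * q 3) := by funext q; simp [Gc]
lemma Gc1 : Gc 1 = fun q : Pt => Real.exp (-2 * q 3) := by funext q; simp [Gc]
lemma Gc2 : Gc 2 = fun q : Pt => Real.exp (4 * q 3) := by funext q; simp [Gc]
lemma Gc3 : Gc 3 = fun _ : Pt => 1 := by funext q; simp [Gc]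

lemma pd_Gc0 (i : Fin 4) (p : Pt) :
    pd i (Gc 0) p = if i = 3 then -2 * Real.exp (-2 * p 3) else 0 := by
  rw [Gc0, pd_exp]
lemma pd_Gc1 (i : Fin 4) (p : Pt) :
    pd i (Gc 1) p = if i = 3 then -2 * Real.exp (-2 * p 3) else 0 := by
  rw [Gc1, pd_exp]
lemma pd_Gc2 (i : Fin 4) (p : Pt) :
    pd i (Gc 2) p = if i = 3 then 4 * Real.exp (4 * p 3) else 0 := by
  rw [Gc2, pd_exp]
lemma pd_Gc3 (i : Fin 4) (p : Pt) : pd i (Gc 3) p = 0 := by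
  rw [Gc3, pd]; simp

/-- Explicit value of ∇̃ of constant vector fields. -/
def NAB (u v : Vec) (q : Pt) : Vec :=
  ![-(u 0 * v 3 + u 3 * v 0), -(u 1 * v 3 + u 3 * v 1), 2 * (u 2 * v 3 + u 3 * v 2),
    Real.exp (-2 * q 3) * (u 0 * v 0 + u 1 * v 1) - 2 * Real.exp (4 * q 3) * (u 2 * v 2)]

lemma nabla_const (u v : Vec) :
    nabla (fun _ => u) (fun _ => v) = fun q => NAB u v q := by
  funext q k
  have hc : ∀ k : Fin 4, fderiv ℝ (fun _ : Pt => v k) q = 0 := fun k => by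
    simp
  have e0 := Real.exp_ne_zero (-2 * q 3)
  have e2 := Real.exp_ne_zero (4 * q 3)
  fin_cases k <;>
    simp [nabla, Fin.sum_univ_four, Chr, pd_Gc0, pd_Gc1, pd_Gc2, pd_Gc3, Gc, NAB, hc] <;>
    field_simp <;> ring

/-- Explicit value of ∇̃_u ∇̃_v w for constant u v w. -/
def NAB2 (u v w : Vec) (q : Pt) : Vec := fun k =>
  NAB u (NAB v w q) q k +
    (if k = 3 then
      u 3 * (-2 * Real.exp (-2 * q 3) * (v 0 * w 0 + v 1 * w 1)
              - 8 * Real.exp (4 * q 3) * (v 2 * w 2)) else 0)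

lemma nabla_NAB (u v w : Vec) :
    nabla (fun _ => u) (fun q => NAB v w q) = fun q => NAB2 u v w q := by
  funext q k
  have hderiv : fderiv ℝ (fun q' : Pt => NAB v w q' 3) q u =
      u 3 * (-2 * Real.exp (-2 * q 3) * (v 0 * w 0 + v 1 * w 1)
              - 8 * Real.exp (4 * q 3) * (v 2 * w 2)) := by
    have h1 := (hasF (-2) q).mul_const (v 0 * w 0 + v 1 * w 1)
    have h2 := ((hasF 4 q).mul_const (v 2 * w 2)).const_mul (2 : ℝ)
    have h := h1.fun_sub h2
    have : (fun q' : Pt => NAB v w q' 3) =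
        fun q' : Pt => Real.exp (-2 * q' 3) * (v 0 * w 0 + v 1 * w 1)
          - 2 * (Real.exp (4 * q' 3) * (v 2 * w 2)) := by
      funext q'; simp [NAB]; ring
    rw [this, h.fderiv]
    simp
    ring
  have e0 := Real.exp_ne_zero (-2 * q 3)
  have e2 := Real.exp_ne_zero (4 * q 3)
  fin_cases k
  · have hc : fderiv ℝ (fun q' : Pt => NAB v w q' 0) q =
        fderiv ℝ (fun _ : Pt => -(v 0 * w 3 + v 3 * w 0)) q := by
      congr 1
    simp only [nabla, NAB2, hc, fderiv_const]
    simp [Fin.sum_univ_four, Chr, pd_Gc0, pd_Gc1, pd_Gc2, pd_Gc3, Gc, NAB]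
    try field_simp
    try ring
  · have hc : fderiv ℝ (fun q' : Pt => NAB v w q' 1) q =
        fderiv ℝ (fun _ : Pt => -(v 1 * w 3 + v 3 * w 1)) q := by
      congr 1
    simp only [nabla, NAB2, hc, fderiv_const]
    simp [Fin.sum_univ_four, Chr, pd_Gc0, pd_Gc1, pd_Gc2, pd_Gc3, Gc, NAB]
    try field_simp
    try ring
  · have hc : fderiv ℝ (fun q' : Pt => NAB v w q' 2) q =
        fderiv ℝ (fun _ : Pt => 2 * (v 2 * w 3 + v 3 * w 2)) q := by
      congr 1
    simp only [nabla, NAB2, hc, fderiv_const]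
    simp [Fin.sum_univ_four, Chr, pd_Gc0, pd_Gc1, pd_Gc2, pd_Gc3, Gc, NAB]
    try field_simp
    try ring
  · simp only [nabla, NAB2]
    rw [show ((⟨3, by norm_num⟩ : Fin 4)) = (3 : Fin 4) from rfl]
    rw [hderiv]
    simp [Fin.sum_univ_four, Chr, pd_Gc0, pd_Gc1, pd_Gc2, pd_Gc3, Gc, NAB]
    field_simp
    ring

lemma bracket_const (u v : Vec) :
    bracket (fun _ => u) (fun _ => v) = fun _ => (fun _ => 0 : Vec) := by
  funext q k
  simp [bracket]

lemma RiemT_eq (p : Pt) (u v w : Vec) :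
    RiemT p u v w = fun k => NAB2 u v w p k - NAB2 v u w p k := by
  funext k
  have hz : nabla (bracket (fun _ => u) (fun _ => v)) (fun _ => w) p k = 0 := by
    rw [bracket_const]
    simp [nabla]
  rw [RiemT, Riem]
  rw [nabla_const v w, nabla_const u w, nabla_NAB, nabla_NAB]
  simp [hz]

lemma exp_m2 (t : ℝ) : Real.exp (-2 * t) = (Real.exp t)⁻¹ * (Real.exp t)⁻¹ := by
  rw [← Real.exp_neg, ← Real.exp_add]; ring_nf

lemma exp_4 (t : ℝ) : Real.exp (4 * t) = Real.exp t * Real.exp t * Real.exp t * Real.exp t := by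
  rw [← Real.exp_add, ← Real.exp_add, ← Real.exp_add]; ring_nf

lemma exp_m2' (t : ℝ) : Real.exp (-(2 * t)) = (Real.exp t)⁻¹ * (Real.exp t)⁻¹ := by
  rw [← neg_mul]; exact exp_m2 t

lemma exp_m2'' (t : ℝ) : Real.exp (-(t * 2)) = (Real.exp t)⁻¹ * (Real.exp t)⁻¹ := by
  rw [mul_comm]; exact exp_m2' t

lemma exp_4' (t : ℝ) : Real.exp (t * 4) = Real.exp t * Real.exp t * Real.exp t * Real.exp t := by
  rw [mul_comm]; exact exp_4 t

set_option maxHeartbeats 1600000 in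
/-- If the unit normal N = aE₁+bE₂+cE₃+dE₄ of a hypersurface of Sol⁴₀ satisfies the Codazzi
condition g(R̃(X,Y)Z, N) = 0 for all tangent X,Y,Z, then (a²+b²)(c²+d²) = 0, i.e. N lies
entirely in span{E₁,E₂} or entirely in span{E₃,E₄}. -/
theorem sol40_codazzi_normal (p : Pt) (a b c d : ℝ)
    (hunit : a ^ 2 + b ^ 2 + c ^ 2 + d ^ 2 = 1)
    (hcod : ∀ u v w : Vec,
      gSol p u (Nvec p a b c d) = 0 → gSol p v (Nvec p a b c d) = 0 →
      gSol p w (Nvec p a b c d) = 0 →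
      gSol p (RiemT p u v w) (Nvec p a b c d) = 0) :
    (a ^ 2 + b ^ 2) * (c ^ 2 + d ^ 2) = 0 := by
  have hA := Real.exp_ne_zero (p 3)
  have hexp2 : Real.exp (-2 * p 3) = (Real.exp (p 3))⁻¹ * (Real.exp (p 3))⁻¹ := exp_m2 _
  have hexp4 : Real.exp (4 * p 3)
      = Real.exp (p 3) * Real.exp (p 3) * Real.exp (p 3) * Real.exp (p 3) := exp_4 _
  have gc0 : Gc 0 p = Real.exp (-2 * p 3) := by simp [Gc]
  have gc1 : Gc 1 p = Real.exp (-2 * p 3) := by simp [Gc]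
  have gc2 : Gc 2 p = Real.exp (4 * p 3) := by simp [Gc]
  have gc3 : Gc 3 p = 1 := by simp [Gc]
  have hNfun : Nvec p a b c d =
      ![a * Real.exp (p 3), b * Real.exp (p 3), c * Real.exp (-2 * p 3), d] := by
    funext j; fin_cases j <;> simp [Nvec, EE]
  have h1 : gSol p ![b * Real.exp (p 3), -(a * Real.exp (p 3)),
      d * Real.exp (-2 * p 3), -c] (Nvec p a b c d) = 0 := by
    rw [hNfun]
    simp only [gSol, Fin.sum_univ_four, gc0, gc1, gc2, gc3, Matrix.cons_val_zero,
      Matrix.cons_val_one, Matrix.head_cons, Matrix.cons_val_two, Matrix.tail_cons,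
      Matrix.cons_val_three, hexp2, hexp4]
    field_simp
    ring
  have h2 : gSol p ![c * Real.exp (p 3), -(d * Real.exp (p 3)),
      -(a * Real.exp (-2 * p 3)), b] (Nvec p a b c d) = 0 := by
    rw [hNfun]
    simp only [gSol, Fin.sum_univ_four, gc0, gc1, gc2, gc3, Matrix.cons_val_zero,
      Matrix.cons_val_one, Matrix.head_cons, Matrix.cons_val_two, Matrix.tail_cons,
      Matrix.cons_val_three, hexp2, hexp4]
    field_simp
    ring
  have h3 : gSol p ![d * Real.exp (p 3), c * Real.exp (p 3),
      -(b * Real.exp (-2 * p 3)), -a] (Nvec p a b c d) = 0 := by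
    rw [hNfun]
    simp only [gSol, Fin.sum_univ_four, gc0, gc1, gc2, gc3, Matrix.cons_val_zero,
      Matrix.cons_val_one, Matrix.head_cons, Matrix.cons_val_two, Matrix.tail_cons,
      Matrix.cons_val_three, hexp2, hexp4]
    field_simp
    ring
  have key := hcod _ _ _ h2 h3 h1
  rw [RiemT_eq, hNfun] at key
  have key2 : (6 : ℝ) * ((a ^ 2 + b ^ 2) * (c ^ 2 + d ^ 2)) = 0 := by
    rw [← key]
    simp only [gSol, Fin.sum_univ_four, NAB2, NAB, gc0, gc1, gc2, gc3,
      Matrix.cons_val_zero, Matrix.cons_val_one, Matrix.head_cons, Matrix.cons_val_two,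
      Matrix.tail_cons, Matrix.cons_val_three]
    have f03 : ((0 : Fin 4) = 3) = False := by simp
    have f13 : ((1 : Fin 4) = 3) = False := by simp
    have f23 : ((2 : Fin 4) = 3) = False := by simp
    have t33 : ((3 : Fin 4) = 3) = True := by simp
    simp only [f03, f13, f23, t33, if_true, if_false, hexp2, hexp4]
    field_simp
    ring
  linarith
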